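/- arXiv:2301.08142 — 2 statements merged into one kernel-verified Lean document; each statement's English description precedes it below -/
import Mathlib

section
/- (Products and quasi-formal shifts) Let x, y : ℕ → ℝ be coefficients of two convergent formal power series and let t ∈ ℝ. Let z_n = ∑_{k=0}^n x_k y_{n−k} be the Cauchy product coefficients. Then for every n, ∑_{m=n}^∞ C(m,n) z_m t^{m−n} = ∑_{k=0}^n (∑_{m=k}^∞ C(m,k) x_m t^{m−k}) · (∑_{m=n−k}^∞ C(m,n−k) y_m t^{m−(n−k)}), i.e. the quasi-formal shift of the Cauchy product equals the Cauchy product of the quasi-formal shifts; all the series involved converge absolutely. -/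
open Filter Topology

private lemma choose_le_two_pow' (m n : ℕ) : m.choose n ≤ 2 ^ m := by
  rcases le_or_gt n m with h | h
  · calc m.choose n ≤ ∑ k ∈ Finset.range (m + 1), m.choose k :=
        Finset.single_le_sum (fun _ _ => Nat.zero_le _)
          (Finset.mem_range.2 (Nat.lt_succ_of_le h))
      _ = 2 ^ m := Nat.sum_range_choose m
  · simp [Nat.choose_eq_zero_of_lt h]

private lemma bound_of_conv {x : ℕ → ℝ}
    (hx : ∀ c : ℝ, 0 < c → Tendsto (fun n => x n * c ^ n) atTop (𝓝 0))
    {c : ℝ} (hc : 0 < c) : ∃ M : ℝ, 0 ≤ M ∧ ∀ m : ℕ, |x m| ≤ M / c ^ m := by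
  obtain ⟨M, hM⟩ := ((hx c hc).abs).bddAbove_range
  have hM' : ∀ m : ℕ, |x m * c ^ m| ≤ M := fun m => hM (Set.mem_range_self m)
  refine ⟨M, le_trans (abs_nonneg _) (hM' 0), fun m => ?_⟩
  have h := hM' m
  rw [abs_mul, abs_of_pos (pow_pos hc m)] at h
  rw [le_div_iff₀ (pow_pos hc m)]
  exact h

private lemma shift_abs_summable {x : ℕ → ℝ}
    (hx : ∀ c : ℝ, 0 < c → Tendsto (fun n => x n * c ^ n) atTop (𝓝 0))
    (t : ℝ) (n : ℕ) :
    Summable fun m : ℕ => |((n + m).choose n : ℝ) * x (n + m) * t ^ m| := by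
  set c : ℝ := 4 * (|t| + 1) with hcdef
  have hc0 : 0 < c := by positivity
  obtain ⟨M, hM0, hM⟩ := bound_of_conv hx hc0
  have h12 : 2 * (|t| + 1) / c = 1 / 2 := by
    rw [hcdef]
    have h1 : |t| + 1 ≠ 0 := by positivity
    field_simp
    ring
  refine Summable.of_nonneg_of_le (fun m => abs_nonneg _) (fun m => ?_)
    (((summable_geometric_of_lt_one (by norm_num) (by norm_num : (1:ℝ)/2 < 1))).mul_left
      (M * (2 / c) ^ n))
  have h2 : ((n + m).choose n : ℝ) ≤ 2 ^ (n + m) := by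
    exact_mod_cast choose_le_two_pow' (n + m) n
  have ht : |t| ^ m ≤ (|t| + 1) ^ m :=
    pow_le_pow_left₀ (abs_nonneg t) (by linarith) m
  calc |((n + m).choose n : ℝ) * x (n + m) * t ^ m|
      = ((n + m).choose n : ℝ) * |x (n + m)| * |t| ^ m := by
        rw [abs_mul, abs_mul, abs_pow, Nat.abs_cast]
    _ ≤ 2 ^ (n + m) * (M / c ^ (n + m)) * (|t| + 1) ^ m := by
        have hx' := hM (n + m)
        have hd : (0:ℝ) ≤ M / c ^ (n + m) := div_nonneg hM0 (pow_pos hc0 _).le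
        gcongr
    _ = M * (2 / c) ^ n * (2 * (|t| + 1) / c) ^ m := by
        rw [pow_add, pow_add, div_pow, div_pow, mul_pow]
        field_simp
        rw [mul_pow]
        ring
    _ = M * (2 / c) ^ n * (1 / 2 : ℝ) ^ m := by rw [h12]

private lemma z_conv {x y z : ℕ → ℝ}
    (hx : ∀ c : ℝ, 0 < c → Tendsto (fun n => x n * c ^ n) atTop (𝓝 0))
    (hy : ∀ c : ℝ, 0 < c → Tendsto (fun n => y n * c ^ n) atTop (𝓝 0))
    (hz : ∀ n : ℕ, z n = ∑ k ∈ Finset.range (n + 1), x k * y (n - k)) :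
    ∀ c : ℝ, 0 < c → Tendsto (fun n => z n * c ^ n) atTop (𝓝 0) := by
  intro c hc
  have h2c : (0:ℝ) < 2 * c := by positivity
  obtain ⟨M, hM0, hM⟩ := bound_of_conv hx h2c
  obtain ⟨M', hM'0, hM'⟩ := bound_of_conv hy h2c
  have hlim : Tendsto (fun m : ℕ => ((m:ℝ) + 1) * (1 / 2 : ℝ) ^ m * (M * M'))
      atTop (𝓝 0) := by
    have hs : Summable (fun m : ℕ => ((m:ℝ) + 1) * (1 / 2 : ℝ) ^ m) := by
      have h1 : Summable (fun m : ℕ => (m:ℝ) ^ 1 * (1 / 2 : ℝ) ^ m) :=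
        summable_pow_mul_geometric_of_norm_lt_one 1
          (by rw [Real.norm_eq_abs, abs_of_pos (by norm_num : (0:ℝ) < 1/2)]; norm_num)
      have h2 : Summable (fun m : ℕ => (1 / 2 : ℝ) ^ m) :=
        summable_geometric_of_lt_one (by norm_num) (by norm_num)
      have := h1.add h2
      refine this.congr fun m => ?_
      ring
    simpa using (hs.tendsto_atTop_zero).mul_const (M * M')
  refine squeeze_zero_norm (fun m => ?_) hlim
  have hzb : |z m| ≤ ((m:ℝ) + 1) * (M * M' / (2 * c) ^ m) := by
    rw [hz m]
    calc |∑ k ∈ Finset.range (m + 1), x k * y (m - k)|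
        ≤ ∑ k ∈ Finset.range (m + 1), |x k * y (m - k)| :=
          Finset.abs_sum_le_sum_abs _ _
      _ ≤ ∑ k ∈ Finset.range (m + 1), M * M' / (2 * c) ^ m := by
          refine Finset.sum_le_sum fun k hk => ?_
          rw [Finset.mem_range, Nat.lt_succ_iff] at hk
          rw [abs_mul]
          calc |x k| * |y (m - k)| ≤ (M / (2 * c) ^ k) * (M' / (2 * c) ^ (m - k)) :=
                mul_le_mul (hM k) (hM' (m - k)) (abs_nonneg _)
                  (div_nonneg hM0 (pow_pos h2c k).le)
            _ = M * M' / (2 * c) ^ m := by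
                rw [div_mul_div_comm, ← pow_add, Nat.add_sub_cancel' hk]
      _ = ((m:ℝ) + 1) * (M * M' / (2 * c) ^ m) := by
          rw [Finset.sum_const, Finset.card_range]
          push_cast
          ring
  have hcm : (0:ℝ) < c ^ m := pow_pos hc m
  calc ‖z m * c ^ m‖ = |z m| * c ^ m := by rw [Real.norm_eq_abs, abs_mul, abs_of_pos hcm]
    _ ≤ (((m:ℝ) + 1) * (M * M' / (2 * c) ^ m)) * c ^ m := by gcongr
    _ = ((m:ℝ) + 1) * (1 / 2 : ℝ) ^ m * (M * M') := by
        have h2 : (1 / 2 : ℝ) ^ m * 2 ^ m = 1 := by rw [← mul_pow]; norm_num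
        rw [mul_pow]
        field_simp
        linear_combination (-(M * M')) * h2

private lemma shift_tsum_eq {x : ℕ → ℝ} (t : ℝ) (k : ℕ)
    (h : Summable fun m : ℕ => |((k + m).choose k : ℝ) * x (k + m) * t ^ m|) :
    (Summable fun a : ℕ => |(a.choose k : ℝ) * x a * t ^ (a - k)|) ∧
      (∑' m : ℕ, ((k + m).choose k : ℝ) * x (k + m) * t ^ m) =
        ∑' a : ℕ, (a.choose k : ℝ) * x a * t ^ (a - k) := by
  set u : ℕ → ℝ := fun a => (a.choose k : ℝ) * x a * t ^ (a - k) with hu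
  have hfun : ∀ m : ℕ, u (m + k) = ((k + m).choose k : ℝ) * x (k + m) * t ^ m := by
    intro m
    rw [hu]
    simp only
    rw [Nat.add_sub_cancel, add_comm m k]
  have habs : Summable fun a : ℕ => |u a| := by
    rw [← summable_nat_add_iff k]
    refine h.congr fun m => ?_
    rw [hfun m]
  have hsum : Summable u := habs.of_abs
  constructor
  · exact habs
  · have hkey := Summable.sum_add_tsum_nat_add k hsum
    have hzero : (∑ a ∈ Finset.range k, u a) = 0 := by
      refine Finset.sum_eq_zero fun a ha => ?_
      rw [Finset.mem_range] at ha
      rw [hu]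
      simp [Nat.choose_eq_zero_of_lt ha]
    rw [hzero, zero_add] at hkey
    rw [← hkey]
    exact tsum_congr fun m => (hfun m).symm

private lemma vandermonde_term (x y : ℕ → ℝ) (t : ℝ) (n a b : ℕ) :
    (∑ k ∈ Finset.range (n + 1),
        ((a.choose k : ℝ) * x a * t ^ (a - k)) *
          ((b.choose (n - k) : ℝ) * y b * t ^ (b - (n - k)))) =
      ((a + b).choose n : ℝ) * (x a * y b) * t ^ (a + b - n) := by
  have hstep : ∀ k ∈ Finset.range (n + 1),
      ((a.choose k : ℝ) * x a * t ^ (a - k)) *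
          ((b.choose (n - k) : ℝ) * y b * t ^ (b - (n - k))) =
        ((a.choose k * b.choose (n - k) : ℕ) : ℝ) * (x a * y b) * t ^ (a + b - n) := by
    intro k hk
    rw [Finset.mem_range, Nat.lt_succ_iff] at hk
    by_cases hka : k ≤ a
    · by_cases hkb : n - k ≤ b
      · have he : a - k + (b - (n - k)) = a + b - n := by omega
        push_cast
        rw [← he, pow_add]
        ring
      · rw [Nat.choose_eq_zero_of_lt (by omega : b < n - k)]
        push_cast
        ring
    · rw [Nat.choose_eq_zero_of_lt (by omega : a < k)]
      push_cast
      ring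
  rw [Finset.sum_congr rfl hstep]
  have hv : (∑ k ∈ Finset.range (n + 1),
      ((a.choose k * b.choose (n - k) : ℕ) : ℝ)) = ((a + b).choose n : ℝ) := by
    rw [← Nat.cast_sum]
    congr 1
    rw [Nat.add_choose_eq, Finset.Nat.sum_antidiagonal_eq_sum_range_succ_mk]
  calc (∑ k ∈ Finset.range (n + 1),
      ((a.choose k * b.choose (n - k) : ℕ) : ℝ) * (x a * y b) * t ^ (a + b - n))
      = (∑ k ∈ Finset.range (n + 1), ((a.choose k * b.choose (n - k) : ℕ) : ℝ)) *
        (x a * y b) * t ^ (a + b - n) := by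
        rw [Finset.sum_mul, Finset.sum_mul]
    _ = ((a + b).choose n : ℝ) * (x a * y b) * t ^ (a + b - n) := by rw [hv]

/-- Products and quasi-formal shifts: the quasi-formal shift by t of the Cauchy
product of two convergent formal power series equals the Cauchy product of their
quasi-formal shifts by t; all series involved converge absolutely. -/
theorem shift_of_cauchy_product (x y : ℕ → ℝ)
    (hx : ∀ c : ℝ, 0 < c → Tendsto (fun n => x n * c ^ n) atTop (𝓝 0))
    (hy : ∀ c : ℝ, 0 < c → Tendsto (fun n => y n * c ^ n) atTop (𝓝 0))
    (t : ℝ) (z : ℕ → ℝ)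
    (hz : ∀ n : ℕ, z n = ∑ k ∈ Finset.range (n + 1), x k * y (n - k)) :
    (∀ n : ℕ, Summable fun m : ℕ => |((n + m).choose n : ℝ) * z (n + m) * t ^ m|) ∧
    (∀ n : ℕ, Summable fun m : ℕ => |((n + m).choose n : ℝ) * x (n + m) * t ^ m|) ∧
    (∀ n : ℕ, Summable fun m : ℕ => |((n + m).choose n : ℝ) * y (n + m) * t ^ m|) ∧
    ∀ n : ℕ,
      (∑' m : ℕ, ((n + m).choose n : ℝ) * z (n + m) * t ^ m) =
        ∑ k ∈ Finset.range (n + 1),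
          (∑' m : ℕ, ((k + m).choose k : ℝ) * x (k + m) * t ^ m) *
            (∑' m : ℕ, (((n - k) + m).choose (n - k) : ℝ) * y ((n - k) + m) * t ^ m) := by
  have hzc := z_conv hx hy hz
  refine ⟨fun n => shift_abs_summable hzc t n, fun n => shift_abs_summable hx t n,
    fun n => shift_abs_summable hy t n, fun n => ?_⟩
  set u : ℕ → ℕ → ℝ := fun k a => (a.choose k : ℝ) * x a * t ^ (a - k) with hudef
  set v : ℕ → ℕ → ℝ := fun l b => (b.choose l : ℝ) * y b * t ^ (b - l) with hvdef
  have hxs := fun k => shift_tsum_eq (x := x) t k (shift_abs_summable hx t k)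
  have hys := fun l => shift_tsum_eq (x := y) t l (shift_abs_summable hy t l)
  have hzs := shift_tsum_eq (x := z) t n (shift_abs_summable hzc t n)
  have hun : ∀ k, Summable fun a => ‖u k a‖ := fun k => by
    simpa only [Real.norm_eq_abs] using (hxs k).1
  have hvn : ∀ l, Summable fun b => ‖v l b‖ := fun l => by
    simpa only [Real.norm_eq_abs] using (hys l).1
  -- rewrite RHS using the shifted sums
  have hrw : ∀ k ∈ Finset.range (n + 1),
      (∑' m : ℕ, ((k + m).choose k : ℝ) * x (k + m) * t ^ m) *
          (∑' m : ℕ, (((n - k) + m).choose (n - k) : ℝ) * y ((n - k) + m) * t ^ m) =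
        ∑' s : ℕ, ∑ i ∈ Finset.range (s + 1), u k i * v (n - k) (s - i) := by
    intro k _
    rw [(hxs k).2, (hys (n - k)).2]
    exact tsum_mul_tsum_eq_tsum_sum_range_of_summable_norm (hun k) (hvn (n - k))
  rw [Finset.sum_congr rfl hrw]
  have hsumm : ∀ k ∈ Finset.range (n + 1),
      Summable fun s : ℕ => ∑ i ∈ Finset.range (s + 1), u k i * v (n - k) (s - i) :=
    fun k _ => (summable_norm_sum_mul_range_of_summable_norm (hun k) (hvn (n - k))).of_norm
  rw [← Summable.tsum_finsetSum hsumm]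
  have hpt : ∀ s : ℕ,
      (∑ k ∈ Finset.range (n + 1), ∑ i ∈ Finset.range (s + 1), u k i * v (n - k) (s - i)) =
        (s.choose n : ℝ) * z s * t ^ (s - n) := by
    intro s
    rw [Finset.sum_comm]
    have h1 : ∀ i ∈ Finset.range (s + 1),
        (∑ k ∈ Finset.range (n + 1), u k i * v (n - k) (s - i)) =
          (s.choose n : ℝ) * (x i * y (s - i)) * t ^ (s - n) := by
      intro i hi
      rw [Finset.mem_range, Nat.lt_succ_iff] at hi
      have := vandermonde_term x y t n i (s - i)
      rw [Nat.add_sub_cancel' hi] at this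
      exact this
    rw [Finset.sum_congr rfl h1, hz s, Finset.mul_sum, Finset.sum_mul]
  rw [tsum_congr hpt]
  exact hzs.2
end

section
/- There exists a function f : [0,1]_ℚ → ℝ such that: (i) f is uniformly continuous; (ii) f(a) < 1/√2 for every a ∈ [0,1]_ℚ, while f(a) → 1/√2 as a → 1/√2 within [0,1]_ℚ (so the extended value of f at 1/√2 equals 1/√2 and is a strict global maximum of the extension); and (iii) for every a ∈ [0,1]_ℚ the derivative f'(a) exists and equals 1. -/
open Filter Topology

/-- The rational interval [u,v]_ℚ = {a ∈ ℚ : u ≤ a ≤ v}. -/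
def RatIcc (u v : ℝ) : Set ℚ := {a : ℚ | u ≤ (a : ℝ) ∧ (a : ℝ) ≤ v}

/-- Uniform continuity of f : M → ℝ for M ⊆ ℚ. -/
def UC (M : Set ℚ) (f : ℚ → ℝ) : Prop :=
  ∀ ε : ℝ, 0 < ε → ∃ δ : ℝ, 0 < δ ∧
    ∀ a ∈ M, ∀ b ∈ M, |(a : ℝ) - (b : ℝ)| ≤ δ → |f a - f b| ≤ ε

/-- y is the extended value of f at x: every sequence in M converging to x has
f-images converging to y. -/
def ExtVal (M : Set ℚ) (f : ℚ → ℝ) (x y : ℝ) : Prop :=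
  ∀ a : ℕ → ℚ, (∀ n, a n ∈ M) →
    Tendsto (fun n => ((a n : ℝ))) atTop (𝓝 x) →
    Tendsto (fun n => f (a n)) atTop (𝓝 y)

/-- The derivative of f at a ∈ M equals y. -/
def HasDerivAtPt (M : Set ℚ) (f : ℚ → ℝ) (a : ℚ) (y : ℝ) : Prop :=
  ∀ ε : ℝ, 0 < ε → ∃ δ : ℝ, 0 < δ ∧
    ∀ b ∈ M, 0 < |(b : ℝ) - (a : ℝ)| → |(b : ℝ) - (a : ℝ)| ≤ δ →
      |(f b - f a) / ((b : ℝ) - (a : ℝ)) - y| ≤ ε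


noncomputable section
namespace CF
open Finset

def mm (i : ℕ) : ℕ := 3^(i+1)

def ns (F : Finset ℕ) : ℝ := ∑ i ∈ F, (1/2:ℝ)^(mm i)
def ws (F : Finset ℕ) : ℝ := ∑ i ∈ F, (1/2:ℝ)^(i+1)

lemma half_pos : (0:ℝ) < 1/2 := by norm_num
lemma half_lt_one : (1/2:ℝ) < 1 := by norm_num

lemma mm_ge (i : ℕ) : i + 2 ≤ mm i := by
  induction i with
  | zero => simp [mm]
  | succ n ih =>
    have : mm (n+1) = 3 * mm n := by simp [mm, pow_succ]; ring
    omega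

lemma mm_mono : StrictMono mm := fun i j h => by
  have := Nat.pow_lt_pow_right (by norm_num : 1 < 3) (by omega : i+1 < j+1)
  simpa [mm] using this

lemma mm_add (t d : ℕ) : mm t + d ≤ mm (t + d) := by
  induction d with
  | zero => simp
  | succ n ih =>
    have h1 : mm (t+n) < mm (t+n+1) := mm_mono (by omega)
    have h2 : t + (n+1) = (t+n)+1 := by ring
    rw [h2]; omega

lemma mm_succ (j : ℕ) : mm (j+1) = 3 * mm j := by simp [mm, pow_succ]; ring

/-- generic tail bound -/
lemma tail_bound (F : Finset ℕ) (t c : ℕ) (e : ℕ → ℕ)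
    (he : ∀ i, t ≤ i → c + (i - t) ≤ e i) :
    ∑ i ∈ F.filter (fun i => t ≤ i), (1/2:ℝ)^(e i) ≤ 2 * (1/2)^c := by
  set S := F.filter (fun i => t ≤ i) with hS
  have h1 : ∑ i ∈ S, (1/2:ℝ)^(e i) ≤ ∑ i ∈ S, (1/2:ℝ)^(c + (i - t)) := by
    apply sum_le_sum
    intro i hi
    have hti : t ≤ i := (mem_filter.mp hi).2
    exact pow_le_pow_of_le_one (by norm_num) (by norm_num) (he i hti)
  have h2 : ∑ i ∈ S, (1/2:ℝ)^(c + (i - t)) = (1/2:ℝ)^c * ∑ i ∈ S, (1/2:ℝ)^(i - t) := by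
    rw [mul_sum]; apply sum_congr rfl; intro i _; rw [pow_add]
  have h3 : ∑ i ∈ S, (1/2:ℝ)^(i - t) ≤ 2 := by
    have hinj : Set.InjOn (fun i => i - t) S := by
      intro a ha b hb hab
      have hta : t ≤ a := (mem_filter.mp ha).2
      have htb : t ≤ b := (mem_filter.mp hb).2
      simp only at hab
      omega
    have : ∑ i ∈ S, (1/2:ℝ)^(i - t) = ∑ j ∈ S.image (fun i => i - t), (1/2:ℝ)^j := by
      rw [sum_image (fun a ha b hb => hinj ha hb)]
    rw [this]
    have hub : S.image (fun i => i - t) ⊆ range ((S.image (fun i => i - t)).sup id + 1) := by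
      intro j hj
      simp only [mem_range]
      have := le_sup (f := id) hj
      simpa using Nat.lt_succ_of_le this
    calc ∑ j ∈ S.image (fun i => i - t), (1/2:ℝ)^j
        ≤ ∑ j ∈ range ((S.image (fun i => i - t)).sup id + 1), (1/2:ℝ)^j := by
          apply sum_le_sum_of_subset_of_nonneg hub
          intro i _ _; positivity
      _ ≤ 2 := sum_geometric_two_le _
  calc ∑ i ∈ S, (1/2:ℝ)^(e i) ≤ (1/2:ℝ)^c * ∑ i ∈ S, (1/2:ℝ)^(i - t) := by
        rw [← h2]; exact h1
    _ ≤ (1/2:ℝ)^c * 2 := by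
        apply mul_le_mul_of_nonneg_left h3 (by positivity)
    _ = 2 * (1/2)^c := by ring

lemma ns_nonneg (F : Finset ℕ) : 0 ≤ ns F := by
  apply sum_nonneg; intro i _; positivity

lemma ws_nonneg (F : Finset ℕ) : 0 ≤ ws F := by
  apply sum_nonneg; intro i _; positivity

lemma ws_le_one (F : Finset ℕ) : ws F ≤ 1 := by
  have := tail_bound F 0 1 (fun i => i + 1) (by intro i _; show 1 + (i-0) ≤ i+1; omega)
  have hf : F.filter (fun i => 0 ≤ i) = F := by
    apply filter_true_of_mem; intro i _; omega
  rw [hf] at this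
  simpa [ws] using this

lemma ns_le_one (F : Finset ℕ) : ns F ≤ 1 := by
  have := tail_bound F 0 1 mm (by intro i _; have := mm_ge i; omega)
  have hf : F.filter (fun i => 0 ≤ i) = F := by
    apply filter_true_of_mem; intro i _; omega
  rw [hf] at this
  simpa [ns] using this

/-- tail of ns beyond k -/
lemma ns_tail (F : Finset ℕ) (t : ℕ) :
    ∑ i ∈ F.filter (fun i => t ≤ i), (1/2:ℝ)^(mm i) ≤ 2 * (1/2)^(mm t) := by
  apply tail_bound
  intro i hi
  have := mm_add t (i - t)
  have : mm t + (i - t) ≤ mm i := by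
    have h := mm_add t (i - t)
    rwa [Nat.add_sub_cancel' hi] at h
  omega

lemma ws_tail (F : Finset ℕ) (t : ℕ) :
    ∑ i ∈ F.filter (fun i => t ≤ i), (1/2:ℝ)^(i+1) ≤ 2 * (1/2)^(t+1) := by
  apply tail_bound (e := fun i => i + 1)
  intro i hi; show t + 1 + (i - t) ≤ i + 1; omega


lemma sqrt2_sq : Real.sqrt 2 * Real.sqrt 2 = 2 :=
  Real.mul_self_sqrt (by norm_num)

lemma sqrt2_gt_one : (1:ℝ) < Real.sqrt 2 := by
  nlinarith [sqrt2_sq, Real.sqrt_nonneg 2]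

lemma sqrt2_lt_two : Real.sqrt 2 < 2 := by
  nlinarith [sqrt2_sq, Real.sqrt_nonneg 2]


lemma sqrt2_key (X Y : ℤ) (hX : 0 < X) (hY : 0 < Y) :
    1 ≤ |Real.sqrt 2 * X - Y| * (Real.sqrt 2 * X + Y) := by
  set R := Real.sqrt 2 with hR
  have hXr : (0:ℝ) < X := by exact_mod_cast hX
  have hYr : (0:ℝ) < Y := by exact_mod_cast hY
  have hRpos : (1:ℝ) < R := sqrt2_gt_one
  have hsumpos : (0:ℝ) < R * X + Y := by nlinarith
  have hne : 2 * X ^ 2 ≠ Y ^ 2 := by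
    intro hcontra
    have h1 : ((Y:ℝ) / X) ^ 2 = 2 := by
      have h : (2:ℝ) * (X:ℝ)^2 = (Y:ℝ)^2 := by exact_mod_cast hcontra
      field_simp
      linarith
    have h2 : Real.sqrt 2 = (Y:ℝ) / X := by
      rw [← h1, Real.sqrt_sq (by positivity)]
    have h3 : Real.sqrt 2 = ((Y / X : ℚ) : ℝ) := by
      rw [h2]; push_cast; ring
    exact (Rat.not_irrational _) (h3 ▸ irrational_sqrt_two)
  have hint : (1:ℝ) ≤ |2 * (X:ℝ)^2 - (Y:ℝ)^2| := by
    have h1 : 2 * X ^ 2 - Y ^ 2 ≠ 0 := fun h => hne (by linarith)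
    have h2 : (1:ℤ) ≤ |2 * X ^ 2 - Y ^ 2| := Int.one_le_abs h1
    calc (1:ℝ) = ((1:ℤ):ℝ) := by norm_num
      _ ≤ |((2 * X ^ 2 - Y ^ 2 : ℤ) : ℝ)| := by
          rw [← Int.cast_abs]; exact_mod_cast h2
      _ = |2 * (X:ℝ)^2 - (Y:ℝ)^2| := by push_cast; ring
  have h1 : |R * (X:ℝ) - Y| * (R * X + Y) = |2 * (X:ℝ)^2 - (Y:ℝ)^2| := by
    rw [← abs_of_pos hsumpos, ← abs_mul]
    congr 1
    nlinarith [sqrt2_sq]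
  rw [h1]
  exact hint

lemma dioph (a : ℚ) (hapos : 0 < a) :
    ∃ ρ : ℝ, 0 < ρ ∧ ∀ F : Finset ℕ,
      ρ ≤ |ns F - (Real.sqrt 2 * a - 1)| := by
  have hnum : 0 < a.num := Rat.num_pos.mpr hapos
  obtain ⟨q, hq, hqpos⟩ : ∃ q : ℕ, q = a.den ∧ 0 < q := ⟨a.den, rfl, a.pos⟩
  obtain ⟨D, hD⟩ : ∃ D : ℕ, D = q * (2 * a.num.toNat + 2 * q) := ⟨_, rfl⟩
  have hDpos : 0 < D := by
    rw [hD]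
    have : 0 < a.num.toNat := by omega
    positivity
  obtain ⟨k, hk⟩ : ∃ k : ℕ, k = 4 * D := ⟨_, rfl⟩
  obtain ⟨M, hM⟩ : ∃ M : ℕ, M = mm k := ⟨_, rfl⟩
  have hkM : k ≤ M := by have := mm_ge k; omega
  have h4D : (4 * D : ℝ) ≤ 2 ^ M := by
    have h1 : 4 * D < 2 ^ k := by rw [← hk]; exact Nat.lt_two_pow_self
    have h2 : (2:ℕ) ^ k ≤ 2 ^ M := Nat.pow_le_pow_right (by norm_num) hkM
    have : (4 * D : ℕ) ≤ 2 ^ M := by omega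
    exact_mod_cast this
  have hD4pos : (0:ℝ) < (D:ℝ) * 4 ^ M := by
    have : (0:ℝ) < D := by exact_mod_cast hDpos
    positivity
  refine ⟨1 / (2 * ((D:ℝ) * 4 ^ M)), by positivity, ?_⟩
  intro F
  set R := Real.sqrt 2 with hR
  set y₀ : ℝ := R * a - 1 with hy₀
  obtain ⟨T, hT⟩ : ∃ T : Finset ℕ, T = F.filter (fun i => i ≤ k) := ⟨_, rfl⟩
  -- tail bound
  have hsplit : ns F = ns T + ∑ i ∈ F.filter (fun i => ¬ i ≤ k), (1/2:ℝ)^(mm i) := by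
    rw [hT, ns, ns, Finset.sum_filter_add_sum_filter_not]
  have htail0 : 0 ≤ ∑ i ∈ F.filter (fun i => ¬ i ≤ k), (1/2:ℝ)^(mm i) := by
    apply sum_nonneg; intro i _; positivity
  have htail : ∑ i ∈ F.filter (fun i => ¬ i ≤ k), (1/2:ℝ)^(mm i)
      ≤ 1 / (2 * ((D:ℝ) * 4 ^ M)) := by
    have hfilt : F.filter (fun i => ¬ i ≤ k) = F.filter (fun i => k+1 ≤ i) := by
      ext i; simp only [Finset.mem_filter, not_le, Nat.succ_le_iff]
    rw [hfilt]
    have h1 := ns_tail F (k+1)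
    have h2 : mm (k+1) = 3 * M := by rw [hM]; exact mm_succ k
    have e1 : ((1:ℝ)/2)^(3*M) = 1 / (2^M * 4^M) := by
      rw [div_pow, one_pow]
      congr 1
      rw [show (4:ℝ) = 2^2 from by norm_num, ← pow_mul, ← pow_add]
      congr 1
      ring
    have h3 : (2:ℝ) * (1/2)^(3*M) ≤ 1 / (2 * ((D:ℝ) * 4 ^ M)) := by
      rw [e1, mul_one_div, div_le_div_iff₀ (by positivity) (by positivity)]
      have h4p : (0:ℝ) < 4 ^ M := by positivity
      calc (2:ℝ) * (2 * ((D:ℝ) * 4 ^ M)) = (4 * D) * 4 ^ M := by ring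
        _ ≤ 2 ^ M * 4 ^ M := mul_le_mul_of_nonneg_right h4D (le_of_lt h4p)
        _ = 1 * (2 ^ M * 4 ^ M) := by ring
    rw [h2] at h1
    linarith
  -- truncation is u / 2^M with u ≤ 2^M
  obtain ⟨u, hu⟩ : ∃ u : ℕ, u = ∑ i ∈ T, 2 ^ (M - mm i) := ⟨_, rfl⟩
  have hucast : (u:ℝ) = ns T * 2 ^ M := by
    rw [hu, ns, Finset.sum_mul]
    push_cast
    apply Finset.sum_congr rfl
    intro i hi
    have hik : i ≤ k := by
      rw [hT] at hi
      exact (Finset.mem_filter.mp hi).2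
    have hmi : mm i ≤ M := by
      rw [hM]
      rcases Nat.eq_or_lt_of_le hik with h | h
      · rw [h]
      · exact le_of_lt (mm_mono h)
    have key : (2:ℝ) ^ (M - mm i) * 2 ^ (mm i) = 2 ^ M := by
      rw [← pow_add]
      congr 1
      omega
    have h2mi : (0:ℝ) < 2 ^ (mm i) := by positivity
    have e : ((1:ℝ)/2) ^ (mm i) = (2 ^ (mm i))⁻¹ := by
      rw [div_pow, one_pow, one_div]
    rw [e]
    field_simp
    linarith [key]
  have hnsT0 : 0 ≤ ns T := ns_nonneg T
  have hnsT1 : ns T ≤ 1 := ns_le_one T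
  have h2Mpos : (0:ℝ) < 2 ^ M := by positivity
  have huM : (u:ℝ) ≤ 2 ^ M := by
    rw [hucast]
    nlinarith
  -- the integers X, Y
  obtain ⟨X, hX⟩ : ∃ X : ℤ, X = a.num * 2 ^ M := ⟨_, rfl⟩
  obtain ⟨Y, hY⟩ : ∃ Y : ℤ, Y = ((2:ℤ) ^ M + u) * q := ⟨_, rfl⟩
  have hXpos : 0 < X := by rw [hX]; positivity
  have hYpos : 0 < Y := by
    rw [hY]
    have : (0:ℤ) < 2 ^ M := by positivity
    have : (0:ℤ) < q := by exact_mod_cast hqpos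
    positivity
  have hkey := sqrt2_key X Y hXpos hYpos
  rw [← hR] at hkey
  -- identity
  have haq : (a:ℝ) * a.den = a.num := by exact_mod_cast Rat.mul_den_eq_num a
  have hqr : (0:ℝ) < (q:ℝ) := by exact_mod_cast hqpos
  have hXr : (X:ℝ) = a.num * 2 ^ M := by rw [hX]; push_cast; ring
  have hYr : (Y:ℝ) = (2 ^ M + u) * q := by rw [hY]; push_cast; ring
  have hnsTu : ns T = u / 2 ^ M := by
    rw [hucast]; field_simp
  have hiden : (y₀ - ns T) * ((q:ℝ) * 2 ^ M) = R * X - Y := by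
    rw [hnsTu, hy₀, hXr, hYr, hq]
    field_simp
    linear_combination (R * 2 ^ M) * haq
  have hqM : (0:ℝ) < (q:ℝ) * 2 ^ M := by positivity
  have habs : |y₀ - ns T| * ((q:ℝ) * 2 ^ M) = |R * X - Y| := by
    rw [← abs_of_pos hqM, ← abs_mul, hiden]
  -- denominator bound
  have hnum' : (a.num.toNat : ℝ) = (a.num : ℝ) := by
    exact_mod_cast Int.toNat_of_nonneg (le_of_lt hnum)
  have hnumr : (0:ℝ) < (a.num:ℝ) := by exact_mod_cast hnum
  have hu0 : (0:ℝ) ≤ u := by positivity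
  have hsumpos : (0:ℝ) < R * X + Y := by
    have hXrp : (0:ℝ) < X := by exact_mod_cast hXpos
    have hYrp : (0:ℝ) < Y := by exact_mod_cast hYpos
    have hRpos : (0:ℝ) < R := lt_trans one_pos sqrt2_gt_one
    exact add_pos (mul_pos hRpos hXrp) hYrp
  have hdenom : (R * X + Y) * ((q:ℝ) * 2 ^ M) ≤ (D:ℝ) * 4 ^ M := by
    have hDr : (D:ℝ) = q * (2 * a.num + 2 * q) := by
      rw [hD]; push_cast; rw [hnum']
    have h4M : (4:ℝ) ^ M = 2 ^ M * 2 ^ M := by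
      rw [show (4:ℝ) = 2 * 2 from by norm_num, mul_pow]
    have hRX : R * X ≤ 2 * a.num * 2 ^ M := by
      rw [hXr]
      have hR2 : R ≤ 2 := le_of_lt sqrt2_lt_two
      calc R * ((a.num:ℝ) * 2 ^ M) ≤ 2 * ((a.num:ℝ) * 2 ^ M) :=
            mul_le_mul_of_nonneg_right hR2 (by positivity)
        _ = 2 * (a.num:ℝ) * 2 ^ M := by ring
    have hYb : (Y:ℝ) ≤ 2 * 2 ^ M * q := by
      rw [hYr]
      have h1 : (2:ℝ) ^ M + u ≤ 2 * 2 ^ M := by linarith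
      calc ((2:ℝ) ^ M + u) * q ≤ (2 * 2 ^ M) * q :=
            mul_le_mul_of_nonneg_right h1 (le_of_lt hqr)
        _ = 2 * 2 ^ M * q := by ring
    have hstep : R * X + Y ≤ 2 * a.num * 2 ^ M + 2 * 2 ^ M * q := add_le_add hRX hYb
    rw [hDr, h4M]
    calc (R * X + Y) * ((q:ℝ) * 2 ^ M)
        ≤ (2 * a.num * 2 ^ M + 2 * 2 ^ M * q) * ((q:ℝ) * 2 ^ M) :=
          mul_le_mul_of_nonneg_right hstep (le_of_lt hqM)
      _ = (q:ℝ) * (2 * a.num + 2 * q) * (2 ^ M * 2 ^ M) := by ring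
  -- main lower bound on |y₀ - ns T|
  have hmain : 1 / ((D:ℝ) * 4 ^ M) ≤ |y₀ - ns T| := by
    have h1 : (1:ℝ) ≤ |y₀ - ns T| * ((R * X + Y) * ((q:ℝ) * 2 ^ M)) := by
      calc (1:ℝ) ≤ |R * X - Y| * (R * X + Y) := hkey
        _ = (|y₀ - ns T| * ((q:ℝ) * 2 ^ M)) * (R * X + Y) := by rw [habs]
        _ = |y₀ - ns T| * ((R * X + Y) * ((q:ℝ) * 2 ^ M)) := by ring
    have h2 : |y₀ - ns T| * ((R * X + Y) * ((q:ℝ) * 2 ^ M))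
        ≤ |y₀ - ns T| * ((D:ℝ) * 4 ^ M) :=
      mul_le_mul_of_nonneg_left hdenom (abs_nonneg _)
    rw [div_le_iff₀ hD4pos]
    linarith
  -- triangle inequality
  have htri : |ns F - y₀| ≥ |y₀ - ns T| - |ns F - ns T| := by
    have h1 : |y₀ - ns T| ≤ |y₀ - ns F| + |ns F - ns T| := by
      calc |y₀ - ns T| = |(y₀ - ns F) + (ns F - ns T)| := by ring_nf
        _ ≤ |y₀ - ns F| + |ns F - ns T| := abs_add_le _ _
    have h2 : |ns F - y₀| = |y₀ - ns F| := abs_sub_comm _ _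
    linarith
  have htail2 : |ns F - ns T| ≤ 1 / (2 * ((D:ℝ) * 4 ^ M)) := by
    have heq : ns F - ns T = ∑ i ∈ F.filter (fun i => ¬ i ≤ k), (1/2:ℝ)^(mm i) := by
      linarith [hsplit]
    rw [heq, abs_of_nonneg htail0]
    exact htail
  have hfin : 1 / ((D:ℝ) * 4 ^ M) = 2 * (1 / (2 * ((D:ℝ) * 4 ^ M))) := by
    field_simp
  linarith


def SA (y : ℝ) : Set ℝ := insert 0 {x | ∃ F : Finset ℕ, ns F ≤ y ∧ ws F = x}
def C (y : ℝ) : ℝ := sSup (SA y)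

lemma SA_nonempty (y : ℝ) : (SA y).Nonempty := ⟨0, Set.mem_insert 0 _⟩

lemma SA_bdd (y : ℝ) : BddAbove (SA y) := by
  refine ⟨1, ?_⟩
  rintro x (rfl | ⟨F, _, rfl⟩)
  · norm_num
  · exact ws_le_one F

lemma C_nonneg (y : ℝ) : 0 ≤ C y := le_csSup (SA_bdd y) (Set.mem_insert 0 _)

lemma C_mono {y₁ y₂ : ℝ} (h : y₁ ≤ y₂) : C y₁ ≤ C y₂ := by
  apply csSup_le_csSup (SA_bdd y₂) (SA_nonempty y₁)
  rintro x (rfl | ⟨F, hF, rfl⟩)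
  · exact Set.mem_insert 0 _
  · exact Set.mem_insert_of_mem _ ⟨F, le_trans hF h, rfl⟩

lemma C_ge_ws {y : ℝ} (F : Finset ℕ) (h : ns F ≤ y) : ws F ≤ C y :=
  le_csSup (SA_bdd y) (Set.mem_insert_of_mem _ ⟨F, h, rfl⟩)

lemma C_of_neg {y : ℝ} (h : y < 0) : C y = 0 := by
  refine le_antisymm ?_ (C_nonneg y)
  apply csSup_le (SA_nonempty y)
  rintro x (rfl | ⟨F, hF, rfl⟩)
  · exact le_refl 0
  · exact absurd (lt_of_le_of_lt hF h) (not_lt.mpr (ns_nonneg F))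

lemma C_zero : C 0 = 0 := by
  refine le_antisymm ?_ (C_nonneg 0)
  apply csSup_le (SA_nonempty 0)
  rintro x (rfl | ⟨F, hF, rfl⟩)
  · rfl
  · have h0 : ns F = 0 := le_antisymm hF (ns_nonneg F)
    have : F = ∅ := by
      by_contra hne
      obtain ⟨i, hi⟩ := Finset.nonempty_iff_ne_empty.mpr hne
      have hpos : (0:ℝ) < (1/2:ℝ)^(mm i) := by positivity
      have := Finset.single_le_sum (f := fun i => (1/2:ℝ)^(mm i))
        (fun i _ => by positivity) hi
      rw [← ns] at this
      linarith
    simp [this, ws]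

lemma geom_Icc : ∀ (b a : ℕ), a ≤ b + 1 →
    ∑ i ∈ Finset.Icc a b, (1/2:ℝ)^(i+1) = (1/2)^a - (1/2)^(b+1) := by
  intro b
  induction b with
  | zero =>
    intro a ha
    interval_cases a
    · simp; norm_num
    · simp
  | succ n ih =>
    intro a ha
    rcases Nat.lt_or_ge a (n+2) with h | h
    · have ha' : a ≤ n + 1 := by omega
      rw [Finset.sum_Icc_succ_top ha' (fun i => (1/2:ℝ)^(i+1)), ih a ha']
      rw [pow_succ ((1:ℝ)/2) (n+1)]
      ring
    · have : a = n + 2 := by omega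
      subst this
      rw [Finset.Icc_eq_empty (by omega)]
      simp

lemma C_modulus (k : ℕ) (y₁ y₂ : ℝ) (h12 : y₁ ≤ y₂)
    (hgap : y₂ - y₁ ≤ (1/2:ℝ)^(mm k + 1)) :
    C y₂ ≤ C y₁ + (1/2)^k := by
  apply csSup_le (SA_nonempty _)
  rintro x (rfl | ⟨F, hF, rfl⟩)
  · have := C_nonneg y₁; positivity
  · by_cases hFk : (F.filter (fun i => i ≤ k)).Nonempty
    · -- main case
      set j := (F.filter (fun i => i ≤ k)).max' hFk with hjdef
      have hjmem : j ∈ F.filter (fun i => i ≤ k) := Finset.max'_mem _ hFk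
      have hjF : j ∈ F := (Finset.mem_filter.mp hjmem).1
      have hjk : j ≤ k := (Finset.mem_filter.mp hjmem).2
      have hjmax : ∀ i ∈ F, i ≤ k → i ≤ j := by
        intro i hi hik
        apply Finset.le_max'
        simp only [Finset.mem_filter]
        exact ⟨hi, hik⟩
      -- the big-element part of F coincides with the > k part
      have hgt : F.filter (fun i => j < i) = F.filter (fun i => k+1 ≤ i) := by
        ext i
        simp only [Finset.mem_filter]
        constructor
        · rintro ⟨hi, hji⟩
          refine ⟨hi, ?_⟩
          by_contra hc
          have : i ≤ k := by omega
          have := hjmax i hi this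
          omega
        · rintro ⟨hi, hki⟩
          exact ⟨hi, by omega⟩
      -- split F
      have hsplit : ns (F.filter (fun i => i < j)) + (1/2:ℝ)^(mm j) ≤ ns F := by
        have h1 : ns F = ns (F.filter (fun i => i < j)) + ns (F.filter (fun i => ¬ i < j)) := by
          rw [ns, ns, ns, Finset.sum_filter_add_sum_filter_not]
        have h2 : (1/2:ℝ)^(mm j) ≤ ns (F.filter (fun i => ¬ i < j)) := by
          apply Finset.single_le_sum (f := fun i => (1/2:ℝ)^(mm i))
            (fun i _ => by positivity)
          exact Finset.mem_filter.mpr ⟨hjF, by omega⟩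
        linarith
      set G := (F.filter (fun i => i < j)) ∪ Finset.Icc (j+1) (k+1) with hG
      have hdisj : Disjoint (F.filter (fun i => i < j)) (Finset.Icc (j+1) (k+1)) := by
        rw [Finset.disjoint_left]
        intro i hi hi2
        have := (Finset.mem_filter.mp hi).2
        have := Finset.mem_Icc.mp hi2
        omega
      -- ns G small
      have hIccns : ∑ i ∈ Finset.Icc (j+1) (k+1), (1/2:ℝ)^(mm i) ≤ (1/2)^(mm j + 1) := by
        have h1 : (Finset.Icc (j+1) (k+1)).filter (fun i => j+1 ≤ i) = Finset.Icc (j+1) (k+1) := by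
          apply Finset.filter_true_of_mem
          intro i hi; exact (Finset.mem_Icc.mp hi).1
        have h2 := ns_tail (Finset.Icc (j+1) (k+1)) (j+1)
        rw [h1] at h2
        have h3 : mm j + 2 ≤ mm (j+1) := by
          have := mm_succ j
          have := mm_ge j
          omega
        have h4 : (2:ℝ) * (1/2)^(mm (j+1)) ≤ 2 * (1/2)^(mm j + 2) := by
          have := pow_le_pow_of_le_one (by norm_num : (0:ℝ) ≤ 1/2) (by norm_num) h3
          linarith
        have h5 : (2:ℝ) * (1/2)^(mm j + 2) = (1/2)^(mm j + 1) := by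
          rw [pow_succ]
          ring
        linarith
      have hnsG : ns G ≤ y₁ := by
        have h1 : ns G = ns (F.filter (fun i => i < j)) + ∑ i ∈ Finset.Icc (j+1) (k+1), (1/2:ℝ)^(mm i) := by
          rw [hG, ns, Finset.sum_union hdisj]; rfl
        have h2 : (1/2:ℝ)^(mm k + 1) ≤ (1/2)^(mm j + 1) := by
          apply pow_le_pow_of_le_one (by norm_num) (by norm_num)
          have := mm_mono.le_iff_le.mpr hjk
          omega
        have h5 : (2:ℝ)*(1/2)^(mm j + 1) = (1/2)^(mm j) := by
          rw [pow_succ]; ring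
        have := hsplit
        have := hF
        -- ns G ≤ ns(F<j) + (1/2)^(mmj+1) ≤ ns F - (1/2)^(mmj) + (1/2)^(mmj+1)
        --      = ns F - (1/2)^(mmj+1) ≤ y₂ - (1/2)^(mmk+1) ≤ y₁
        nlinarith [hIccns]
      -- ws comparison
      have hwsF : ws F ≤ ws G + (1/2:ℝ)^k := by
        have e1 : ws F = ws (F.filter (fun i => i < j)) + ws (F.filter (fun i => ¬ i < j)) := by
          rw [ws, ws, ws, Finset.sum_filter_add_sum_filter_not]
        have e2 : F.filter (fun i => ¬ i < j) = insert j (F.filter (fun i => j < i)) := by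
          ext i
          simp only [Finset.mem_filter, Finset.mem_insert]
          constructor
          · rintro ⟨hi, hji⟩
            rcases Nat.eq_or_lt_of_le (by omega : j ≤ i) with h | h
            · exact Or.inl h.symm
            · exact Or.inr ⟨hi, h⟩
          · rintro (rfl | ⟨hi, hji⟩)
            · exact ⟨hjF, by omega⟩
            · exact ⟨hi, by omega⟩
        have e3 : j ∉ F.filter (fun i => j < i) := by
          simp only [Finset.mem_filter]; omega
        have e4 : ws (F.filter (fun i => ¬ i < j))
            = (1/2:ℝ)^(j+1) + ws (F.filter (fun i => j < i)) := by
          rw [e2, ws, Finset.sum_insert e3]; rfl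
        have e5 : ws (F.filter (fun i => j < i)) ≤ (1/2:ℝ)^(k+1) := by
          rw [hgt]
          have h1 : (F.filter (fun i => k+1 ≤ i)) = F.filter (fun i => k+1 ≤ i) := rfl
          have h2 := ws_tail F (k+1)
          have h3 : (2:ℝ) * (1/2)^(k+1+1) = (1/2)^(k+1) := by rw [pow_succ]; ring
          rw [ws]
          linarith
        have e6 : ws G = ws (F.filter (fun i => i < j)) + ((1/2:ℝ)^(j+1) - (1/2)^(k+2)) := by
          rw [hG, ws, Finset.sum_union hdisj]
          have := geom_Icc (k+1) (j+1) (by omega)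
          rw [this]; rfl
        have h7 : (1/2:ℝ)^(k+1) + (1/2:ℝ)^(k+2) ≤ (1/2)^k := by
          have h8 : (1/2:ℝ)^(k+1) = (1/2)^k * (1/2) := pow_succ _ _
          have h9 : (1/2:ℝ)^(k+2) = (1/2)^k * (1/4) := by rw [pow_add]; norm_num
          nlinarith [pow_nonneg (by norm_num : (0:ℝ) ≤ 1/2) k]
        linarith
      have := C_ge_ws G hnsG
      linarith
    · -- all elements > k
      have hF2 : F.filter (fun i => k+1 ≤ i) = F := by
        ext i
        simp only [Finset.mem_filter, and_iff_left_iff_imp]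
        intro hi
        by_contra hc
        exact hFk ⟨i, Finset.mem_filter.mpr ⟨hi, by omega⟩⟩
      have h2 := ws_tail F (k+1)
      rw [hF2] at h2
      have h3 : (2:ℝ) * (1/2)^(k+1+1) = (1/2)^(k+1) := by rw [pow_succ]; ring
      have h4 : (1/2:ℝ)^(k+1) ≤ (1/2)^k := by
        apply pow_le_pow_of_le_one (by norm_num) (by norm_num); omega
      have h5 := C_nonneg y₁
      have : ws F ≤ (1/2:ℝ)^(k+1) := by rw [ws]; linarith
      linarith


lemma sqrt2_pos : (0:ℝ) < Real.sqrt 2 := lt_trans one_pos sqrt2_gt_one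

lemma C_close (k : ℕ) (y y' : ℝ) (h : |y - y'| ≤ (1/2:ℝ)^(mm k + 1)) :
    |C y - C y'| ≤ (1/2)^k := by
  rcases le_total y y' with hle | hle
  · have h1 : C y ≤ C y' := C_mono hle
    have h2 : C y' ≤ C y + (1/2)^k := by
      apply C_modulus k y y' hle
      rw [abs_sub_comm] at h
      rw [abs_of_nonneg (by linarith)] at h
      linarith
    rw [abs_of_nonpos (by linarith)]
    linarith
  · have h1 : C y' ≤ C y := C_mono hle
    have h2 : C y ≤ C y' + (1/2)^k := by
      apply C_modulus k y' y hle
      rw [abs_of_nonneg (by linarith)] at h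
      linarith
    rw [abs_of_nonneg (by linarith)]
    linarith

/-- C y ≥ y for 0 < y ≤ 1/2. -/
lemma C_ge_self {y : ℝ} (h0 : 0 < y) (h2 : y ≤ 1/2) : y ≤ C y := by
  have hex : ∃ j : ℕ, (1/2:ℝ)^(mm j) ≤ y := by
    obtain ⟨n, hn⟩ := exists_pow_lt_of_lt_one h0 (by norm_num : (1/2:ℝ) < 1)
    refine ⟨n, le_trans ?_ (le_of_lt hn)⟩
    apply pow_le_pow_of_le_one (by norm_num) (by norm_num)
    have := mm_ge n; omega
  classical
  set j := Nat.find hex with hj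
  have hjle : (1/2:ℝ)^(mm j) ≤ y := Nat.find_spec hex
  have hCy : ws {j} ≤ C y := by
    apply C_ge_ws
    simpa [ns] using hjle
  have hws : ws {j} = (1/2:ℝ)^(j+1) := by simp [ws]
  rw [hws] at hCy
  rcases Nat.eq_zero_or_pos j with hj0 | hjpos
  · rw [hj0] at hCy
    norm_num at hCy
    linarith
  · have hmin : ¬ ((1/2:ℝ)^(mm (j-1)) ≤ y) := Nat.find_min hex (by omega)
    push_neg at hmin
    have hstep : (1/2:ℝ)^(mm (j-1)) ≤ (1/2:ℝ)^(j+1) := by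
      apply pow_le_pow_of_le_one (by norm_num) (by norm_num)
      have := mm_ge (j-1); omega
    linarith

/-- local constancy of C near the image of any rational in (s,∞) or below s. -/
lemma flat (a : ℚ) : ∃ δ : ℝ, 0 < δ ∧ ∀ b : ℚ,
    |(b:ℝ) - (a:ℝ)| ≤ δ → C (Real.sqrt 2 * b - 1) = C (Real.sqrt 2 * a - 1) := by
  set R := Real.sqrt 2 with hR
  set y₀ : ℝ := R * a - 1 with hy₀
  have hsb : ∀ b : ℚ, |(R * b - 1) - y₀| = R * |(b:ℝ) - a| := by
    intro b
    rw [hy₀, show (R * b - 1) - (R * a - 1) = R * ((b:ℝ) - a) from by ring,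
      abs_mul, abs_of_pos sqrt2_pos]
  rcases lt_trichotomy y₀ 0 with hneg | hzero | hpos
  · refine ⟨-y₀ / 4, by linarith, ?_⟩
    intro b hb
    have h1 := hsb b
    have h2 : |(R * b - 1) - y₀| ≤ 2 * (-y₀ / 4) := by
      rw [h1]
      have : R * |(b:ℝ) - a| ≤ 2 * |(b:ℝ) - a| :=
        mul_le_mul_of_nonneg_right (le_of_lt sqrt2_lt_two) (abs_nonneg _)
      have h3 : 2 * |(b:ℝ) - a| ≤ 2 * (-y₀ / 4) := by linarith
      linarith
    have hbneg : R * b - 1 < 0 := by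
      have := abs_le.mp h2
      linarith [this.2]
    rw [C_of_neg hbneg, C_of_neg hneg]
  · exfalso
    have ha0 : (a:ℝ) ≠ 0 := by
      intro h
      rw [hy₀, h] at hzero
      norm_num at hzero
    have heq : R = ((1/a : ℚ) : ℝ) := by
      rw [hy₀] at hzero
      push_cast
      field_simp
      linarith
    rw [hR] at heq
    exact (Rat.not_irrational _) (heq ▸ irrational_sqrt_two)
  · have hapos : 0 < a := by
      by_contra hc
      push_neg at hc
      have : (a:ℝ) ≤ 0 := by exact_mod_cast hc
      nlinarith [sqrt2_pos]
    obtain ⟨ρ, hρ, hdio⟩ := dioph a hapos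
    rw [← hR, ← hy₀] at hdio
    refine ⟨ρ / 4, by linarith, ?_⟩
    intro b hb
    have h1 := hsb b
    have h2 : |(R * b - 1) - y₀| ≤ ρ / 2 := by
      rw [h1]
      have : R * |(b:ℝ) - a| ≤ 2 * (ρ/4) := by
        calc R * |(b:ℝ) - a| ≤ 2 * |(b:ℝ) - a| :=
          mul_le_mul_of_nonneg_right (le_of_lt sqrt2_lt_two) (abs_nonneg _)
        _ ≤ 2 * (ρ/4) := by linarith
      linarith
    -- C is constant on [y₀ - ρ/2, y₀ + ρ/2]
    have key : ∀ y y' : ℝ, |y - y₀| ≤ ρ/2 → |y' - y₀| ≤ ρ/2 → C y ≤ C y' := by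
      intro y y' hy hy'
      apply csSup_le (SA_nonempty y)
      rintro x (rfl | ⟨F, hF, rfl⟩)
      · exact C_nonneg y'
      · apply C_ge_ws
        have hd := hdio F
        rcases le_or_gt (ns F) (y₀ - ρ) with h | h
        · have := abs_le.mp hy'
          linarith
        · exfalso
          have h2' : ns F < y₀ + ρ := by
            have := abs_le.mp hy
            linarith
          rcases abs_le.mp (abs_le.mpr ⟨by linarith, by linarith⟩ :
            |ns F - y₀| ≤ ρ) with _
          -- direct: |ns F - y₀| < ρ contradicts hd
          have : |ns F - y₀| < ρ := by
            rw [abs_lt]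
            constructor <;> linarith
          linarith [hd]
    have e0 : |y₀ - y₀| ≤ ρ/2 := by simp; linarith
    exact le_antisymm (key _ _ h2 e0) (key _ _ e0 h2)

theorem main :
    ∃ f : ℚ → ℝ,
      (∀ ε : ℝ, 0 < ε → ∃ δ : ℝ, 0 < δ ∧
        ∀ (a b : ℚ), |(a : ℝ) - (b : ℝ)| ≤ δ → |f a - f b| ≤ ε) ∧
      (∀ a : ℚ, 0 ≤ (a:ℝ) → (a:ℝ) ≤ 1 → f a < 1 / Real.sqrt 2) ∧
      (∀ a : ℕ → ℚ,
        Tendsto (fun n => ((a n : ℝ))) atTop (𝓝 (1 / Real.sqrt 2)) →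
        Tendsto (fun n => f (a n)) atTop (𝓝 (1 / Real.sqrt 2))) ∧
      (∀ (a : ℚ) (ε : ℝ), 0 < ε → ∃ δ : ℝ, 0 < δ ∧
        ∀ (b : ℚ), 0 < |(b : ℝ) - (a : ℝ)| → |(b : ℝ) - (a : ℝ)| ≤ δ →
          |(f b - f a) / ((b : ℝ) - (a : ℝ)) - 1| ≤ ε) := by
  set R := Real.sqrt 2 with hR
  have hs : R * (1 / R) = 1 := by
    exact mul_one_div_cancel (ne_of_gt sqrt2_pos)
  set s : ℝ := 1 / R with hsdef
  refine ⟨fun a => (a:ℝ) - C (R * a - 1), ?_, ?_, ?_, ?_⟩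
  · -- UC
    intro ε hε
    obtain ⟨k, hk⟩ := exists_pow_lt_of_lt_one (by linarith : (0:ℝ) < ε/2)
      (by norm_num : (1/2:ℝ) < 1)
    refine ⟨min (ε/2) ((1/2)^(mm k + 2)), by positivity, ?_⟩
    intro a b hab
    have h1 : |(a:ℝ) - b| ≤ ε/2 := le_trans hab (min_le_left _ _)
    have h2 : |(a:ℝ) - b| ≤ (1/2)^(mm k + 2) := le_trans hab (min_le_right _ _)
    have h3 : |(R * a - 1) - (R * b - 1)| ≤ (1/2)^(mm k + 1) := by
      rw [show (R * a - 1) - (R * b - 1) = R * ((a:ℝ) - b) from by ring,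
        abs_mul, abs_of_pos sqrt2_pos]
      calc R * |(a:ℝ) - b| ≤ 2 * |(a:ℝ) - b| :=
            mul_le_mul_of_nonneg_right (le_of_lt sqrt2_lt_two) (abs_nonneg _)
        _ ≤ 2 * (1/2)^(mm k + 2) := by linarith
        _ = (1/2)^(mm k + 1) := by rw [pow_succ]; ring
    have h4 := C_close k _ _ h3
    calc |((a:ℝ) - C (R * a - 1)) - ((b:ℝ) - C (R * b - 1))|
        = |((a:ℝ) - b) - (C (R * a - 1) - C (R * b - 1))| := by ring_nf
      _ ≤ |(a:ℝ) - b| + |C (R * a - 1) - C (R * b - 1)| := abs_sub _ _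
      _ ≤ ε/2 + (1/2)^k := add_le_add h1 h4
      _ ≤ ε := by linarith
  · -- strictly below s
    intro a h0 h1
    show (a:ℝ) - C (R * (a:ℝ) - 1) < s
    rcases lt_trichotomy (R * (a:ℝ) - 1) 0 with hneg | hzero | hpos
    · rw [C_of_neg hneg]
      have h2 : (a:ℝ) < 1 / R := by
        rw [lt_div_iff₀ sqrt2_pos]
        linarith
      have h3 : s = 1 / R := hsdef
      linarith
    · exfalso
      have ha0 : (a:ℝ) ≠ 0 := by
        intro h; rw [h] at hzero; norm_num at hzero
      have heq : R = ((1/a : ℚ) : ℝ) := by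
        push_cast
        field_simp
        linarith
      rw [hR] at heq
      exact (Rat.not_irrational _) (heq ▸ irrational_sqrt_two)
    · have hR32 : R < 3/2 := by
        nlinarith [sqrt2_sq, Real.sqrt_nonneg 2, hR]
      have hy2 : R * a - 1 ≤ 1/2 := by
        have : R * (a:ℝ) ≤ R * 1 := mul_le_mul_of_nonneg_left h1 (le_of_lt sqrt2_pos)
        linarith
      have hC := C_ge_self hpos hy2
      have h2aa : R * R * (a:ℝ) = 2 * a := by rw [sqrt2_sq]
      have hprod : (0:ℝ) < (2 - R) * (R * (a:ℝ) - 1) :=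
        mul_pos (by linarith [sqrt2_lt_two]) (by linarith)
      have hlt : (a:ℝ) - (R * a - 1) < 1 / R := by
        rw [lt_div_iff₀ sqrt2_pos]
        nlinarith [hprod, h2aa]
      have hle2 : (a:ℝ) - C (R * a - 1) ≤ (a:ℝ) - (R * a - 1) := by linarith
      have : s = 1 / R := hsdef
      linarith
  · -- ExtVal
    intro a hconv
    rw [Metric.tendsto_atTop] at hconv ⊢
    intro ε hε
    obtain ⟨k, hk⟩ := exists_pow_lt_of_lt_one (by linarith : (0:ℝ) < ε/2)
      (by norm_num : (1/2:ℝ) < 1)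
    obtain ⟨N, hN⟩ := hconv (min (ε/4) ((1/2)^(mm k + 2)))
      (by positivity)
    refine ⟨N, ?_⟩
    intro n hn
    have h := hN n hn
    rw [Real.dist_eq] at h ⊢
    have h1 : |(a n : ℝ) - s| < ε/4 := lt_of_lt_of_le h (min_le_left _ _)
    have h2 : |(a n : ℝ) - s| < (1/2)^(mm k + 2) := lt_of_lt_of_le h (min_le_right _ _)
    have h3 : |(R * (a n) - 1) - 0| ≤ (1/2)^(mm k + 1) := by
      have e : R * (a n : ℝ) - 1 - 0 = R * ((a n : ℝ) - s) := by
        rw [hsdef]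
        rw [mul_sub, mul_one_div_cancel (ne_of_gt sqrt2_pos)]
        ring
      rw [e, abs_mul, abs_of_pos sqrt2_pos]
      calc R * |(a n:ℝ) - s| ≤ 2 * |(a n:ℝ) - s| :=
            mul_le_mul_of_nonneg_right (le_of_lt sqrt2_lt_two) (abs_nonneg _)
        _ ≤ 2 * (1/2)^(mm k + 2) := by linarith
        _ = (1/2)^(mm k + 1) := by rw [pow_succ]; ring
    have h4 := C_close k _ _ h3
    rw [C_zero, sub_zero] at h4
    calc |((a n:ℝ) - C (R * (a n) - 1)) - s|
        = |((a n:ℝ) - s) - C (R * (a n) - 1)| := by ring_nf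
      _ ≤ |(a n:ℝ) - s| + |C (R * (a n) - 1)| := abs_sub _ _
      _ < ε/4 + (1/2)^k := by
          apply add_lt_add_of_lt_of_le h1
          exact h4
      _ < ε := by linarith
  · -- derivative
    intro a ε hε
    obtain ⟨δ, hδ, hflat⟩ := flat a
    rw [← hR] at hflat
    refine ⟨δ, hδ, ?_⟩
    intro b hne hle
    show |(((b:ℝ) - C (R * (b:ℝ) - 1)) - ((a:ℝ) - C (R * (a:ℝ) - 1))) / ((b:ℝ) - (a:ℝ)) - 1| ≤ ε
    rw [hflat b hle]
    have hba : (b:ℝ) - a ≠ 0 := by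
      intro h
      rw [h] at hne
      simp at hne
    have : ((b:ℝ) - C (R * a - 1)) - ((a:ℝ) - C (R * a - 1)) = (b:ℝ) - a := by ring
    rw [this, div_self hba]
    simp
    linarith


end CF
end

/-- A counter-intuitive HMC real function: a uniformly continuous f : [0,1]_ℚ → ℝ
with all values strictly below 1/√2, extended value 1/√2 at the irrational point
1/√2 (hence a strict global maximum of the extension), and derivative equal to 1
at every point of [0,1]_ℚ. -/
theorem counterintuitive_function :
    ∃ f : ℚ → ℝ,
      UC (RatIcc 0 1) f ∧
      (∀ a ∈ RatIcc 0 1, f a < 1 / Real.sqrt 2) ∧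
      ExtVal (RatIcc 0 1) f (1 / Real.sqrt 2) (1 / Real.sqrt 2) ∧
      (∀ a ∈ RatIcc 0 1, HasDerivAtPt (RatIcc 0 1) f a 1) := by
  obtain ⟨f, huc, hlt, hext, hder⟩ := CF.main
  refine ⟨f, ?_, ?_, ?_, ?_⟩
  · intro ε hε
    obtain ⟨δ, hδ, h⟩ := huc ε hε
    exact ⟨δ, hδ, fun a _ b _ hab => h a b hab⟩
  · intro a ha
    exact hlt a ha.1 ha.2
  · intro a _ hconv
    exact hext a hconv
  · intro a _ ε hε
    obtain ⟨δ, hδ, h⟩ := hder a ε hε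
    exact ⟨δ, hδ, fun b _ hb1 hb2 => h b hb1 hb2⟩
end
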